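/- Fix an integer m ≥ 1, a nonempty subset C_r ⊆ {1,…,m}, and let Ω_r := diag(1_{C_r}) − (1/|C_r|) 1_{C_r} 1_{C_r}^T ∈ ℝ^{m×m}. Let M ∈ ℝ^{m×m} be symmetric positive definite, let P_r be the Moore–Penrose pseudoinverse of Ω_r M Ω_r, and set F_r := I − P_r M. Then: (a) F_r^T M = M F_r (F_r is self-adjoint with respect to the inner product ⟨x,y⟩_M = x^T M y); (b) F_r² = F_r; (c) (F_r x)^T M (F_r x − x) = 0 for every x ∈ ℝ^m (F_r is an M-orthogonal projection); (d) F_r maps the hyperplane ker 1^T = {x : 1^T x = 0} into itself. -/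

import Mathlib

open Matrix

/-- The centering matrix `Ω_C = diag(1_C) − (1/|C|) 1_C 1_Cᵀ` associated with a cluster `C`. -/
noncomputable def Omega {m : ℕ} (C : Finset (Fin m)) : Matrix (Fin m) (Fin m) ℝ :=
  Matrix.diagonal (fun i => if i ∈ C then (1 : ℝ) else 0) -
    (1 / (C.card : ℝ)) • Matrix.vecMulVec (fun i => if i ∈ C then (1 : ℝ) else 0)
      (fun i => if i ∈ C then (1 : ℝ) else 0)

/-- `P` is the Moore–Penrose pseudoinverse of `B`. -/
def IsMP {m : ℕ} (B P : Matrix (Fin m) (Fin m) ℝ) : Prop :=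
  B * P * B = B ∧ P * B * P = P ∧ (B * P)ᵀ = B * P ∧ (P * B)ᵀ = P * B

theorem Omega_transpose {m : ℕ} (C : Finset (Fin m)) : (Omega C)ᵀ = Omega C := by
  unfold Omega
  rw [transpose_sub, transpose_smul, diagonal_transpose]
  congr 1
  ext i j; simp [vecMulVec_apply, mul_comm]

theorem Omega_idem {m : ℕ} (C : Finset (Fin m)) (hC : C.Nonempty) :
    Omega C * Omega C = Omega C := by
  set v : Fin m → ℝ := fun i => if i ∈ C then (1 : ℝ) else 0 with hv
  have hvv : ∀ i, v i * v i = v i := by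
    intro i; by_cases h : i ∈ C <;> simp [hv, h]
  have hc : (C.card : ℝ) ≠ 0 := by
    exact_mod_cast Finset.card_ne_zero.mpr hC
  have hsum : v ⬝ᵥ v = (C.card : ℝ) := by
    simp only [dotProduct]
    rw [Finset.sum_congr rfl (fun i _ => hvv i)]
    simp [hv, Finset.sum_ite_mem]
  have h1 : diagonal v * diagonal v = diagonal v := by
    rw [diagonal_mul_diagonal]; exact congrArg diagonal (funext hvv)
  have h2 : diagonal v * vecMulVec v v = vecMulVec v v := by
    ext i j; simp [diagonal_mul, vecMulVec_apply, ← mul_assoc, hvv]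
  have h3 : vecMulVec v v * diagonal v = vecMulVec v v := by
    ext i j; simp [mul_diagonal, vecMulVec_apply, mul_assoc, hvv]
  have h4 : vecMulVec v v * vecMulVec v v = (C.card : ℝ) • vecMulVec v v := by
    ext i j
    simp only [mul_apply, vecMulVec_apply, Matrix.smul_apply, smul_eq_mul, ← hsum, dotProduct,
      Finset.sum_mul, Finset.mul_sum]
    congr 1; ext k; ring
  show (diagonal v - (1 / (C.card:ℝ)) • vecMulVec v v) * (diagonal v - (1 / (C.card:ℝ)) • vecMulVec v v)
      = diagonal v - (1 / (C.card:ℝ)) • vecMulVec v v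
  simp only [sub_mul, mul_sub, smul_mul_assoc, mul_smul_comm, smul_smul]
  rw [h1, h2, h3, h4]
  rw [smul_smul, show (1 / (C.card:ℝ) * (C.card:ℝ)) = 1 by field_simp, one_smul, sub_self,
    smul_zero, sub_zero]

theorem Omega_mulVec_ones {m : ℕ} (C : Finset (Fin m)) (hC : C.Nonempty) :
    (Omega C).mulVec (fun _ => (1:ℝ)) = 0 := by
  set v : Fin m → ℝ := fun i => if i ∈ C then (1 : ℝ) else 0 with hv
  have hc : (C.card : ℝ) ≠ 0 := by
    exact_mod_cast Finset.card_ne_zero.mpr hC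
  funext i
  simp only [Omega, ← hv, sub_mulVec, smul_mulVec, Pi.sub_apply, Pi.smul_apply,
    smul_eq_mul, Pi.zero_apply]
  have hdiag : (diagonal v).mulVec (fun _ => (1:ℝ)) i = v i := by
    simp [mulVec_diagonal]
  have hsum : (∑ j, v j) = (C.card : ℝ) := by simp [hv, Finset.sum_ite_mem]
  have hvmv : (vecMulVec v v).mulVec (fun _ => (1:ℝ)) i = v i * (C.card : ℝ) := by
    simp [mulVec, vecMulVec_apply, dotProduct, ← Finset.mul_sum, hsum]
  rw [hdiag, hvmv]
  field_simp
  simp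

theorem mp_unique {m : ℕ} {B P Q : Matrix (Fin m) (Fin m) ℝ}
    (hP : IsMP B P) (hQ : IsMP B Q) : P = Q := by
  obtain ⟨p1, p2, p3, p4⟩ := hP
  obtain ⟨q1, q2, q3, q4⟩ := hQ
  have hBP : B * P = B * Q := by
    calc B * P = (B * Q * B) * P := by rw [q1]
    _ = (B * Q) * (B * P) := by rw [mul_assoc]
    _ = (B * Q)ᵀ * (B * P)ᵀ := by rw [q3, p3]
    _ = Qᵀ * (B * P * B)ᵀ := by simp only [transpose_mul, mul_assoc]
    _ = Qᵀ * Bᵀ := by rw [p1]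
    _ = (B * Q)ᵀ := by rw [transpose_mul]
    _ = B * Q := q3
  have hPB : P * B = Q * B := by
    calc P * B = (P * B)ᵀ := p4.symm
    _ = (P * (B * Q * B))ᵀ := by rw [q1]
    _ = ((P * B) * (Q * B))ᵀ := by simp only [mul_assoc]
    _ = (Q * B)ᵀ * (P * B)ᵀ := by rw [transpose_mul]
    _ = (Q * B) * (P * B) := by rw [q4, p4]
    _ = Q * (B * P * B) := by simp only [mul_assoc]
    _ = Q * B := by rw [p1]
  calc P = P * B * P := p2.symm
  _ = Q * B * P := by rw [hPB]
  _ = Q * (B * P) := by rw [mul_assoc]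
  _ = Q * (B * Q) := by rw [hBP]
  _ = Q * B * Q := by rw [mul_assoc]
  _ = Q := q2

/-- The map `F_r = I − P_r M` is an `M`-self-adjoint projection, it is an
`M`-orthogonal projection, and it preserves the hyperplane `ker 1ᵀ`. -/
theorem Fr_projection_properties (m : ℕ) (hm : 1 ≤ m) (C : Finset (Fin m)) (hC : C.Nonempty)
    (M : Matrix (Fin m) (Fin m) ℝ) (hM : M.PosDef)
    (P : Matrix (Fin m) (Fin m) ℝ) (hP : IsMP (Omega C * M * Omega C) P)
    (F : Matrix (Fin m) (Fin m) ℝ) (hF : F = 1 - P * M) :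
    -- (a) self-adjoint w.r.t. ⟨x,y⟩_M
    Fᵀ * M = M * F ∧
    -- (b) projection
    F * F = F ∧
    -- (c) M-orthogonal projection
    (∀ x : Fin m → ℝ, F.mulVec x ⬝ᵥ M.mulVec (F.mulVec x - x) = 0) ∧
    -- (d) ker 1ᵀ is invariant
    (∀ x : Fin m → ℝ, (∑ i, x i = 0) → ∑ i, F.mulVec x i = 0) := by
  set Ω := Omega C with hΩ
  set B := Ω * M * Ω with hB
  obtain ⟨e1, e2, e3, e4⟩ := hP
  have hMt : Mᵀ = M := by simpa using hM.1.eq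
  have hΩt : Ωᵀ = Ω := Omega_transpose C
  have hBt : Bᵀ = B := by
    rw [hB, transpose_mul, transpose_mul, hΩt, hMt]
    simp only [mul_assoc]
  have t1 : B * Pᵀ * B = B := by
    have := congrArg Matrix.transpose e1
    simpa [transpose_mul, hBt, mul_assoc] using this
  have t2 : Pᵀ * B * Pᵀ = Pᵀ := by
    have := congrArg Matrix.transpose e2
    simpa [transpose_mul, hBt, mul_assoc] using this
  have hBPt : B * Pᵀ = (P * B)ᵀ := by rw [transpose_mul, hBt]
  have hPtB : Pᵀ * B = (B * P)ᵀ := by rw [transpose_mul, hBt]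
  have t3 : (B * Pᵀ)ᵀ = B * Pᵀ := by rw [hBPt, transpose_transpose, e4, ← e4, ← hBPt]
  have t4 : (Pᵀ * B)ᵀ = Pᵀ * B := by rw [hPtB, transpose_transpose, e3, ← e3, ← hPtB]
  have hPt : Pᵀ = P := mp_unique ⟨t1, t2, t3, t4⟩ ⟨e1, e2, e3, e4⟩
  have hPBc : P * B = B * P := by
    calc P * B = (P * B)ᵀ := e4.symm
    _ = Bᵀ * Pᵀ := by rw [transpose_mul]
    _ = B * P := by rw [hBt, hPt]
  have hΩB : Ω * B = B := by
    rw [hB, show Ω * (Ω * M * Ω) = (Ω * Ω) * (M * Ω) by simp only [mul_assoc],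
      Omega_idem C hC, ← hΩ, ← mul_assoc]
  have hBΩ : B * Ω = B := by
    rw [hB, mul_assoc (Ω * M), Omega_idem C hC, ← hΩ]
  have hBPP : B * (P * P) = P := by
    rw [← mul_assoc, ← hPBc, e2]
  have hOP : Ω * P = P := by
    rw [← hBPP, ← mul_assoc, hΩB]
  have hPPB : P * P * B = P := by
    rw [mul_assoc, hPBc, ← mul_assoc, e2]
  have hPO : P * Ω = P := by
    rw [← hPPB, mul_assoc (P * P), hBΩ]
  have hPMP : P * M * P = P := by
    calc P * M * P = (P * Ω) * M * (Ω * P) := by rw [hPO, hOP]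
    _ = P * (Ω * M * Ω) * P := by simp only [mul_assoc]
    _ = P := e2
  have ha : Fᵀ * M = M * F := by
    rw [hF]
    simp only [transpose_sub, transpose_one, transpose_mul, hPt, hMt, sub_mul, mul_sub,
      one_mul, mul_one, mul_assoc]
  have hPMPM : P * M * (P * M) = P * M := by
    calc P * M * (P * M) = (P * M * P) * M := by simp only [mul_assoc]
    _ = P * M := by rw [hPMP]
  have hb : F * F = F := by
    rw [hF]
    simp only [sub_mul, mul_sub, one_mul, mul_one]
    rw [hPMPM]
    abel
  refine ⟨ha, hb, ?_, ?_⟩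
  · intro x
    have key : Fᵀ * M * (F - 1) = 0 := by
      rw [mul_sub, mul_one, ha, mul_assoc, hb, sub_self]
    have hsub : F.mulVec x - x = (F - 1).mulVec x := by
      rw [sub_mulVec, one_mulVec]
    rw [hsub, mulVec_mulVec, ← vecMul_transpose F x, dotProduct_mulVec, vecMul_vecMul,
      show Fᵀ * (M * (F - 1)) = Fᵀ * M * (F - 1) by rw [mul_assoc], key]
    simp
  · intro x hx
    have hvΩ : (fun _ => (1:ℝ)) ᵥ* Ω = 0 := by
      rw [← hΩt, vecMul_transpose, hΩ, Omega_mulVec_ones C hC]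
    have hvP : (fun _ => (1:ℝ)) ᵥ* P = 0 := by
      rw [← hOP, ← vecMul_vecMul, hvΩ, zero_vecMul]
    have hvF : (fun _ => (1:ℝ)) ᵥ* F = fun _ => (1:ℝ) := by
      rw [hF, vecMul_sub, vecMul_one, ← vecMul_vecMul, hvP, zero_vecMul, sub_zero]
    calc ∑ i, F.mulVec x i = (fun _ => (1:ℝ)) ⬝ᵥ F.mulVec x := by simp [dotProduct]
    _ = ((fun _ => (1:ℝ)) ᵥ* F) ⬝ᵥ x := by rw [dotProduct_mulVec]
    _ = (fun _ => (1:ℝ)) ⬝ᵥ x := by rw [hvF]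
    _ = 0 := by simpa [dotProduct] using hx
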